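/- Every minimal dominating set of the path P_n with n ≥ 2 vertices is CCD. -/

import Mathlib

open Finset

variable {V : Type*} [Fintype V] [DecidableEq V]

/-- Number of neighbours of `v` inside the set `S`. -/
def nbrsIn (G : SimpleGraph V) [DecidableRel G.Adj] (S : Finset V) (v : V) : ℕ :=
  (S.filter (fun u => G.Adj v u)).card

/-- `H` is complementary component dominant (CCD). -/
def CCD (G : SimpleGraph V) [DecidableRel G.Adj] (H : Finset V) : Prop :=
  (∀ x y, G.Adj x y → x ∈ H → y ∈ H → nbrsIn G Hᶜ x = nbrsIn G Hᶜ y) ∧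
  (∀ u v, G.Adj u v → u ∉ H → v ∉ H → nbrsIn G H u = nbrsIn G H v)

/-- The path graph on `n` vertices `0, 1, …, n-1`. -/
def pathG (n : ℕ) : SimpleGraph (Fin n) where
  Adj i j := i.val + 1 = j.val ∨ j.val + 1 = i.val
  symm := ⟨by intro i j h; tauto⟩
  loopless := ⟨by intro i h; rcases h with h | h <;> omega⟩

instance (n : ℕ) : DecidableRel (pathG n).Adj :=
  fun i j => inferInstanceAs (Decidable (i.val + 1 = j.val ∨ j.val + 1 = i.val))

def Dominating {n : ℕ} (G : SimpleGraph (Fin n)) (D : Finset (Fin n)) : Prop :=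
  ∀ v, v ∈ D ∨ ∃ u ∈ D, G.Adj u v

lemma nbrsIn_eq_one {n : ℕ} (S : Finset (Fin n)) (x w : Fin n)
    (hw : w ∈ S) (hadj : (pathG n).Adj x w)
    (huniq : ∀ u ∈ S, (pathG n).Adj x u → u = w) :
    nbrsIn (pathG n) S x = 1 := by
  unfold nbrsIn
  rw [Finset.card_eq_one]
  refine ⟨w, ?_⟩
  ext u
  simp only [Finset.mem_filter, Finset.mem_singleton]
  constructor
  · rintro ⟨h1, h2⟩; exact huniq u h1 h2
  · rintro rfl; exact ⟨hw, hadj⟩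

lemma priv_nbr {n : ℕ} (D : Finset (Fin n)) (hdom : Dominating (pathG n) D)
    (hmin : ∀ D' : Finset (Fin n), D' ⊂ D → ¬ Dominating (pathG n) D')
    (x y : Fin n) (hx : x ∈ D) (hy : y ∈ D) (hadj : (pathG n).Adj x y) :
    ∃ v, v ∉ D ∧ (pathG n).Adj x v ∧ ∀ u ∈ D, (pathG n).Adj u v → u = x := by
  have hxy : x ≠ y := (pathG n).ne_of_adj hadj
  have hnd := hmin (D.erase x) (Finset.erase_ssubset hx)
  unfold Dominating at hnd
  push_neg at hnd
  obtain ⟨v, hv1, hv2⟩ := hnd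
  rcases hdom v with hvD | ⟨u, huD, huv⟩
  · -- v ∈ D, so v = x; but y dominates x
    have hvx : v = x := by
      by_contra h
      exact hv1 (Finset.mem_erase.mpr ⟨h, hvD⟩)
    exfalso
    exact hv2 y (Finset.mem_erase.mpr ⟨hxy.symm, hy⟩) (hvx ▸ (pathG n).adj_symm hadj)
  · have hux : u = x := by
      by_contra h
      exact hv2 u (Finset.mem_erase.mpr ⟨h, huD⟩) huv
    rw [hux] at huv
    have hvD : v ∉ D := by
      intro hvD
      have hvx : v = x := by
        by_contra h
        exact hv1 (Finset.mem_erase.mpr ⟨h, hvD⟩)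
      exact (pathG n).loopless.irrefl x (hvx ▸ huv)
    refine ⟨v, hvD, huv, ?_⟩
    intro u' hu' hadj'
    by_contra h
    exact hv2 u' (Finset.mem_erase.mpr ⟨h, hu'⟩) hadj'

/-- Every minimal dominating set of the path `P_n`, `n ≥ 2`, is CCD. -/
theorem minimalDominating_CCD_path (n : ℕ) (hn : 2 ≤ n) (D : Finset (Fin n))
    (hdom : Dominating (pathG n) D)
    (hmin : ∀ D' : Finset (Fin n), D' ⊂ D → ¬ Dominating (pathG n) D') :
    CCD (pathG n) D := by
  constructor
  · intro x y hadj hx hy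
    obtain ⟨v, hv, hxv, _⟩ := priv_nbr D hdom hmin x y hx hy hadj
    obtain ⟨w, hw, hyw, _⟩ := priv_nbr D hdom hmin y x hy hx ((pathG n).adj_symm hadj)
    have hA : (x.val + 1 = y.val ∨ y.val + 1 = x.val) := hadj
    have hB : (x.val + 1 = v.val ∨ v.val + 1 = x.val) := hxv
    have hC : (y.val + 1 = w.val ∨ w.val + 1 = y.val) := hyw
    have hvy : v.val ≠ y.val := fun h => hv (by rw [show v = y from Fin.ext h]; exact hy)
    have hwx : w.val ≠ x.val := fun h => hw (by rw [show w = x from Fin.ext h]; exact hx)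
    have e1 : nbrsIn (pathG n) Dᶜ x = 1 := by
      apply nbrsIn_eq_one Dᶜ x v (Finset.mem_compl.mpr hv) hxv
      intro u hu hadjU
      have hD : (x.val + 1 = u.val ∨ u.val + 1 = x.val) := hadjU
      have huy : u.val ≠ y.val := fun h =>
        (Finset.mem_compl.mp hu) (by rw [show u = y from Fin.ext h]; exact hy)
      exact Fin.ext (by omega)
    have e2 : nbrsIn (pathG n) Dᶜ y = 1 := by
      apply nbrsIn_eq_one Dᶜ y w (Finset.mem_compl.mpr hw) hyw
      intro u hu hadjU
      have hD : (y.val + 1 = u.val ∨ u.val + 1 = y.val) := hadjU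
      have hux : u.val ≠ x.val := fun h =>
        (Finset.mem_compl.mp hu) (by rw [show u = x from Fin.ext h]; exact hx)
      exact Fin.ext (by omega)
    rw [e1, e2]
  · intro u v hadj hu hv
    rcases hdom u with h | ⟨a, haD, hau⟩
    · exact absurd h hu
    rcases hdom v with h | ⟨b, hbD, hbv⟩
    · exact absurd h hv
    have hA : (u.val + 1 = v.val ∨ v.val + 1 = u.val) := hadj
    have hB : (a.val + 1 = u.val ∨ u.val + 1 = a.val) := hau
    have hC : (b.val + 1 = v.val ∨ v.val + 1 = b.val) := hbv
    have hav : a.val ≠ v.val := fun h => hv (by rw [show v = a from Fin.ext h.symm]; exact haD)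
    have hbu : b.val ≠ u.val := fun h => hu (by rw [show u = b from Fin.ext h.symm]; exact hbD)
    have e1 : nbrsIn (pathG n) D u = 1 := by
      apply nbrsIn_eq_one D u a haD ((pathG n).adj_symm hau)
      intro w hw hadjW
      have hD : (u.val + 1 = w.val ∨ w.val + 1 = u.val) := hadjW
      have hwv : w.val ≠ v.val := fun h => hv (by rw [show v = w from Fin.ext h.symm]; exact hw)
      exact Fin.ext (by omega)
    have e2 : nbrsIn (pathG n) D v = 1 := by
      apply nbrsIn_eq_one D v b hbD ((pathG n).adj_symm hbv)
      intro w hw hadjW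
      have hD : (v.val + 1 = w.val ∨ w.val + 1 = v.val) := hadjW
      have hwu : w.val ≠ u.val := fun h => hu (by rw [show u = w from Fin.ext h.symm]; exact hw)
      exact Fin.ext (by omega)
    rw [e1, e2]
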